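/- Let X be a Banach space and M, N closed subspaces of X. If the addition map T : M × N → M + N is open, then M + N, with the norm inherited from X, is topologically isomorphic to the Banach space (M × N)/ker T, and consequently M + N is closed in X. -/

import Mathlib

/-- The addition map `T : M ×₁ N → X`, `(m, n) ↦ m + n`, where the product
carries the `ℓ¹` (sum) norm `‖(m,n)‖ = ‖m‖ + ‖n‖`. -/
noncomputable def addT {X : Type*} [NormedAddCommGroup X] [NormedSpace ℝ X]
    (M N : Submodule ℝ X) : WithLp 1 (↥M × ↥N) →ₗ[ℝ] X :=
  (M.subtype.coprod N.subtype).comp (WithLp.linearEquiv 1 ℝ (↥M × ↥N)).toLinearMap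

theorem addT_mem_sup {X : Type*} [NormedAddCommGroup X] [NormedSpace ℝ X]
    (M N : Submodule ℝ X) (p : WithLp 1 (↥M × ↥N)) : addT M N p ∈ M ⊔ N :=
  Submodule.add_mem_sup ((WithLp.equiv 1 (↥M × ↥N)) p).1.2 ((WithLp.equiv 1 (↥M × ↥N)) p).2.2

theorem addT_continuous {X : Type*} [NormedAddCommGroup X] [NormedSpace ℝ X]
    (M N : Submodule ℝ X) : Continuous (addT M N) := by
  have h1 : Continuous (WithLp.equiv 1 (↥M × ↥N)) := WithLp.prod_continuous_ofLp 1 ↥M ↥N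
  have : ⇑(addT M N) = fun p => ((WithLp.equiv 1 (↥M × ↥N) p).1 : X)
      + ((WithLp.equiv 1 (↥M × ↥N) p).2 : X) := rfl
  rw [this]
  fun_prop

theorem open_addition_map_implies_closed (X : Type*) [NormedAddCommGroup X]
    [NormedSpace ℝ X] [CompleteSpace X] (M N : Submodule ℝ X)
    (hM : IsClosed (M : Set X)) (hN : IsClosed (N : Set X))
    (hopen : IsOpenMap (fun p : WithLp 1 (↥M × ↥N) =>
      (⟨addT M N p, addT_mem_sup M N p⟩ : ↥(M ⊔ N)))) :
    Nonempty ((WithLp 1 (↥M × ↥N) ⧸ LinearMap.ker (addT M N)) ≃L[ℝ] ↥(M ⊔ N)) ∧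
      IsClosed ((M ⊔ N : Submodule ℝ X) : Set X) := by
  haveI : CompleteSpace M := hM.completeSpace_coe
  haveI : CompleteSpace N := hN.completeSpace_coe
  set K := LinearMap.ker (addT M N) with hK
  -- the codomain-restricted addition map
  set F : WithLp 1 (↥M × ↥N) →ₗ[ℝ] ↥(M ⊔ N) :=
    (addT M N).codRestrict (M ⊔ N) (addT_mem_sup M N) with hF
  have hFfun : ⇑F = fun p : WithLp 1 (↥M × ↥N) =>
      (⟨addT M N p, addT_mem_sup M N p⟩ : ↥(M ⊔ N)) := rfl
  have hFc : Continuous F := by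
    rw [hFfun]; exact (addT_continuous M N).subtype_mk _
  have hFsurj : Function.Surjective F := by
    rintro ⟨x, hx⟩
    rcases Submodule.mem_sup.mp hx with ⟨m, hm, n, hn, rfl⟩
    exact ⟨(WithLp.equiv 1 (↥M × ↥N)).symm (⟨m, hm⟩, ⟨n, hn⟩), rfl⟩
  have hkerF : LinearMap.ker F = K := by
    rw [hF, hK, LinearMap.ker_codRestrict]
  -- the induced map on the quotient
  set g : (WithLp 1 (↥M × ↥N) ⧸ K) →ₗ[ℝ] ↥(M ⊔ N) := K.liftQ F hkerF.ge with hg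
  have hgmk : ∀ x, g (K.mkQ x) = F x := fun x => rfl
  have hginj : Function.Injective g := by
    rw [← LinearMap.ker_eq_bot, hg, Submodule.ker_liftQ_eq_bot _ _ _ hkerF.le]
  have hgsurj : Function.Surjective g := fun y => by
    rcases hFsurj y with ⟨x, hx⟩; exact ⟨K.mkQ x, hx⟩
  have hgc : Continuous g := by
    rw [K.isOpenQuotientMap_mkQ.isQuotientMap.continuous_iff]
    exact hFc
  have hgopen : IsOpenMap g := by
    intro U hU
    have : ⇑g '' U = ⇑F '' (⇑K.mkQ ⁻¹' U) := by
      conv_lhs => rw [← Set.image_preimage_eq U K.mkQ_surjective]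
      rw [← Set.image_comp]
      rfl
    rw [this, hFfun]
    exact hopen _ (hU.preimage K.isOpenQuotientMap_mkQ.continuous)
  -- the continuous linear equivalence
  let e : (WithLp 1 (↥M × ↥N) ⧸ K) ≃ₗ[ℝ] ↥(M ⊔ N) :=
    LinearEquiv.ofBijective g ⟨hginj, hgsurj⟩
  have hec : Continuous e := hgc
  let E : (WithLp 1 (↥M × ↥N) ⧸ K) ≃L[ℝ] ↥(M ⊔ N) :=
    { e with
      continuous_toFun := hec
      continuous_invFun := by
        have h := (Equiv.toHomeomorphOfContinuousOpen
          (e : (WithLp 1 (↥M × ↥N) ⧸ K) ≃ ↥(M ⊔ N)) hec hgopen).continuous_invFun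
        exact h }
  refine ⟨⟨E⟩, ?_⟩
  -- completeness transfers through the uniform equivalence
  haveI : IsUniformAddGroup (WithLp 1 (↥M × ↥N) ⧸ K) :=
    SeminormedAddCommGroup.to_isUniformAddGroup
  have hue : (WithLp 1 (↥M × ↥N) ⧸ K) ≃ᵤ ↥(M ⊔ N) :=
    { toEquiv := E.toEquiv
      uniformContinuous_toFun := E.toContinuousLinearMap.uniformContinuous
      uniformContinuous_invFun := E.symm.toContinuousLinearMap.uniformContinuous }
  haveI : CompleteSpace ↥(M ⊔ N) := hue.completeSpace_iff.mp inferInstance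
  exact (completeSpace_coe_iff_isComplete.mp ‹_›).isClosed
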